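/- Let T be a shift operator on a Hilbert space H and let K = ker T* = H ⊖ T(H). Then the closed subspaces Tⁱ(K), i ∈ ℕ, are pairwise orthogonal and their closed linear span equals H; that is, H is the orthogonal direct sum ⊕_{i=0}^∞ Tⁱ(K). -/

import Mathlib

open Filter Topology

/-- Wold decomposition for a shift operator. If `T` is a shift operator on a
Hilbert space `H` and `K = ker T* = H ⊖ T(H)`, then the subspaces `Tⁱ(K)` are pairwise
orthogonal and their closed linear span is all of `H`: `H = ⊕_{i=0}^∞ Tⁱ(K)`. -/
theorem wold_decomposition_of_shift
    {H : Type*} [NormedAddCommGroup H] [InnerProductSpace ℂ H] [CompleteSpace H]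
    (T : H →L[ℂ] H)
    -- `T` is a shift operator
    (hiso : Isometry T)
    (hpure : ∀ f : H,
      Tendsto (fun n : ℕ => ‖((ContinuousLinearMap.adjoint T) ^ n) f‖) atTop (𝓝 0)) :
    -- each `Tⁱ(K)` is closed
    (∀ i : ℕ, IsClosed
      (((LinearMap.ker (ContinuousLinearMap.adjoint T : H →ₗ[ℂ] H)).map
        ((T ^ i : H →L[ℂ] H) : H →ₗ[ℂ] H) : Submodule ℂ H) : Set H)) ∧
    -- the subspaces `Tⁱ(K)` are pairwise orthogonal
    (∀ i j : ℕ, i ≠ j →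
      ∀ x ∈ (LinearMap.ker (ContinuousLinearMap.adjoint T : H →ₗ[ℂ] H)).map
          ((T ^ i : H →L[ℂ] H) : H →ₗ[ℂ] H),
      ∀ y ∈ (LinearMap.ker (ContinuousLinearMap.adjoint T : H →ₗ[ℂ] H)).map
          ((T ^ j : H →L[ℂ] H) : H →ₗ[ℂ] H),
      (inner ℂ x y : ℂ) = 0) ∧
    -- their closed linear span equals `H`
    (⨆ i : ℕ, (LinearMap.ker (ContinuousLinearMap.adjoint T : H →ₗ[ℂ] H)).map
        ((T ^ i : H →L[ℂ] H) : H →ₗ[ℂ] H)).topologicalClosure = ⊤ := by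
  set S := ContinuousLinearMap.adjoint T with hS
  set K := LinearMap.ker (S : H →ₗ[ℂ] H) with hK
  -- T preserves inner products
  have hnorm : ∀ x : H, ‖T x‖ = ‖x‖ := fun x => by
    simpa using hiso.dist_eq x 0
  have Tiso : H →ₗᵢ[ℂ] H := ⟨T.toLinearMap, hnorm⟩
  have hinner : ∀ x y : H, (inner ℂ (T x) (T y) : ℂ) = inner ℂ x y := fun x y =>
    (⟨T.toLinearMap, hnorm⟩ : H →ₗᵢ[ℂ] H).inner_map_map x y
  -- S ∘ T = id
  have hST : ∀ x : H, S (T x) = x := by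
    intro x
    apply ext_inner_right ℂ
    intro y
    rw [ContinuousLinearMap.adjoint_inner_left]
    exact (hinner x y).symm ▸ rfl
  -- powers are isometries
  have hisoPow : ∀ i : ℕ, Isometry ((T ^ i : H →L[ℂ] H)) := by
    intro i
    induction i with
    | zero => simpa [ContinuousLinearMap.one_def] using isometry_id
    | succ n ih =>
      have : ((T ^ (n + 1) : H →L[ℂ] H) : H → H) = T ∘ (T ^ n : H →L[ℂ] H) := by
        funext x
        simp [pow_succ', ContinuousLinearMap.mul_apply]
      rw [this]
      exact hiso.comp ih
  have hinnerPow : ∀ (i : ℕ) (x y : H),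
      (inner ℂ ((T ^ i : H →L[ℂ] H) x) ((T ^ i : H →L[ℂ] H) y) : ℂ) = inner ℂ x y := by
    intro i
    induction i with
    | zero => simp
    | succ n ih =>
      intro x y
      simp only [pow_succ, ContinuousLinearMap.mul_apply]
      rw [ih, hinner]
  refine ⟨?_, ?_, ?_⟩
  · -- closedness
    intro i
    have hKc : IsComplete (K : Set H) := S.isClosed_ker.isComplete
    have : IsComplete (((T ^ i : H →L[ℂ] H)) '' (K : Set H)) :=
      ((isComplete_image_iff (hisoPow i).isUniformInducing).2 hKc)
    have himg : ((K.map ((T ^ i : H →L[ℂ] H) : H →ₗ[ℂ] H) : Submodule ℂ H) : Set H)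
        = ((T ^ i : H →L[ℂ] H)) '' (K : Set H) := by
      ext x; exact Iff.rfl
    rw [himg]
    exact this.isClosed
  · -- orthogonality
    have key : ∀ i j : ℕ, i < j →
        ∀ x ∈ K.map ((T ^ i : H →L[ℂ] H) : H →ₗ[ℂ] H),
        ∀ y ∈ K.map ((T ^ j : H →L[ℂ] H) : H →ₗ[ℂ] H), (inner ℂ x y : ℂ) = 0 := by
      intro i j hij x hx y hy
      obtain ⟨a, ha, rfl⟩ := hx
      obtain ⟨b, hb, rfl⟩ := hy
      have hj : j = i + (j - i) := by omega
      have hdecomp : (T ^ j : H →L[ℂ] H) b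
          = (T ^ i : H →L[ℂ] H) ((T ^ (j - i) : H →L[ℂ] H) b) := by
        conv_lhs => rw [hj, pow_add]
        rfl
      show (inner ℂ ((T ^ i : H →L[ℂ] H) a) ((T ^ j : H →L[ℂ] H) b) : ℂ) = 0
      rw [hdecomp, hinnerPow]
      have hpos : j - i = (j - i - 1) + 1 := by omega
      have : (T ^ (j - i) : H →L[ℂ] H) b = T ((T ^ (j - i - 1) : H →L[ℂ] H) b) := by
        rw [hpos, pow_succ']; rfl
      rw [this, ← ContinuousLinearMap.adjoint_inner_left]
      have : S a = 0 := ha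
      rw [← hS, this, inner_zero_left]
    intro i j hij x hx y hy
    rcases lt_or_gt_of_ne hij with h | h
    · exact key i j h x hx y hy
    · have := key j i h y hy x hx
      rw [← inner_conj_symm, this, map_zero]
  · -- density
    rw [Submodule.eq_top_iff']
    intro f
    set M := ⨆ i : ℕ, K.map ((T ^ i : H →L[ℂ] H) : H →ₗ[ℂ] H) with hM
    have hmemn : ∀ n : ℕ,
        f - (T ^ n : H →L[ℂ] H) ((S ^ n : H →L[ℂ] H) f) ∈ M := by
      intro n
      induction n with
      | zero => simp
      | succ n ih =>
        have hker : ((S ^ n : H →L[ℂ] H) f) - T (S ((S ^ n : H →L[ℂ] H) f)) ∈ K := by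
          have : S (((S ^ n : H →L[ℂ] H) f) - T (S ((S ^ n : H →L[ℂ] H) f))) = 0 := by
            rw [map_sub, hST, sub_self]
          exact this
        have hsplit : f - (T ^ (n + 1) : H →L[ℂ] H) ((S ^ (n + 1) : H →L[ℂ] H) f)
            = (f - (T ^ n : H →L[ℂ] H) ((S ^ n : H →L[ℂ] H) f))
              + (T ^ n : H →L[ℂ] H)
                  (((S ^ n : H →L[ℂ] H) f) - T (S ((S ^ n : H →L[ℂ] H) f))) := by
          rw [map_sub]
          have h1 : (T ^ (n + 1) : H →L[ℂ] H) ((S ^ (n + 1) : H →L[ℂ] H) f)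
              = (T ^ n : H →L[ℂ] H) (T (S ((S ^ n : H →L[ℂ] H) f))) := by
            rw [pow_succ T, pow_succ' S]
            rfl
          rw [h1]
          abel
        rw [hsplit]
        exact M.add_mem ih (Submodule.mem_iSup_of_mem n ⟨_, hker, rfl⟩)
    have htend : Tendsto (fun n : ℕ =>
        f - (T ^ n : H →L[ℂ] H) ((S ^ n : H →L[ℂ] H) f)) atTop (𝓝 f) := by
      rw [tendsto_iff_norm_sub_tendsto_zero]
      have heq : ∀ n : ℕ,
          ‖(f - (T ^ n : H →L[ℂ] H) ((S ^ n : H →L[ℂ] H) f)) - f‖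
            = ‖((S ^ n : H →L[ℂ] H)) f‖ := by
        intro n
        rw [sub_sub_cancel_left, norm_neg]
        exact (hisoPow n).norm_map_of_map_zero (map_zero _) _
      simp only [heq]
      exact hpure f
    rw [← SetLike.mem_coe, Submodule.topologicalClosure_coe]
    exact mem_closure_of_tendsto htend (Eventually.of_forall hmemn)
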